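/- Let f : ℝ → ℝ be differentiable with |f'(u)| ≤ L for all u ∈ [m, M], and let λ > 0 satisfy λ·L ≤ 1/3. Define H(a, b, c) = (1/6)(a + 4b + c) - (λ/2)(f(c) - f(a)). Then H is monotonically nondecreasing in each of its three arguments on [m, M]³, and consequently, if a, b, c ∈ [m, M] then m ≤ H(a, b, c) ≤ M, provided f is defined on [m, M]. -/
import Mathlib


theorem stmt_4 (m M L lam : ℝ) (hmM : m ≤ M) (f f' : ℝ → ℝ)
    (hf : ∀ u ∈ Set.Icc m M, HasDerivAt f (f' u) u)
    (hL : ∀ u ∈ Set.Icc m M, |f' u| ≤ L)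
    (hlam : 0 < lam) (hcfl : lam * L ≤ 1 / 3) :
    let H : ℝ → ℝ → ℝ → ℝ := fun a b c =>
      (1 / 6) * (a + 4 * b + c) - (lam / 2) * (f c - f a)
    (∀ a ∈ Set.Icc m M, ∀ a' ∈ Set.Icc m M, ∀ b ∈ Set.Icc m M, ∀ c ∈ Set.Icc m M,
        a ≤ a' → H a b c ≤ H a' b c) ∧
    (∀ a ∈ Set.Icc m M, ∀ b ∈ Set.Icc m M, ∀ b' ∈ Set.Icc m M, ∀ c ∈ Set.Icc m M,
        b ≤ b' → H a b c ≤ H a b' c) ∧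
    (∀ a ∈ Set.Icc m M, ∀ b ∈ Set.Icc m M, ∀ c ∈ Set.Icc m M, ∀ c' ∈ Set.Icc m M,
        c ≤ c' → H a b c ≤ H a b c') ∧
    (∀ a ∈ Set.Icc m M, ∀ b ∈ Set.Icc m M, ∀ c ∈ Set.Icc m M,
        H a b c ∈ Set.Icc m M) := by
  intro H
  have hL0 : 0 ≤ L := le_trans (abs_nonneg _) (hL m ⟨le_refl m, hmM⟩)
  -- Lipschitz-type bound
  have lip : ∀ x ∈ Set.Icc m M, ∀ y ∈ Set.Icc m M, x ≤ y →
      |f y - f x| ≤ L * (y - x) := by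
    intro x hx y hy hxy
    rcases eq_or_lt_of_le hxy with rfl | hlt
    · simp
    · have hsub : Set.Icc x y ⊆ Set.Icc m M :=
        Set.Icc_subset_Icc hx.1 hy.2
      have hcont : ContinuousOn f (Set.Icc x y) := fun u hu =>
        ((hf u (hsub hu)).continuousAt).continuousWithinAt
      have hderiv : ∀ u ∈ Set.Ioo x y, HasDerivAt f (f' u) u := fun u hu =>
        hf u (hsub (Set.mem_Icc_of_Ioo hu))
      obtain ⟨c, hc, hceq⟩ := exists_hasDerivAt_eq_slope f f' hlt hcont hderiv
      have hbd := hL c (hsub (Set.mem_Icc_of_Ioo hc))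
      have hpos : (0:ℝ) < y - x := sub_pos.mpr hlt
      have : |f y - f x| = |f' c| * (y - x) := by
        rw [hceq, abs_div, abs_of_pos hpos, div_mul_cancel₀]
        exact ne_of_gt hpos
      rw [this]
      exact mul_le_mul_of_nonneg_right hbd (le_of_lt hpos)
  have key : lam / 2 * L ≤ 1 / 6 := by nlinarith
  have hmonc : ∀ a, ∀ b, ∀ c ∈ Set.Icc m M, ∀ c' ∈ Set.Icc m M,
      c ≤ c' → H a b c ≤ H a b c' := by
    intro a b c hc c' hc' hcc
    have h1 := lip c hc c' hc' hcc
    have h2 : lam / 2 * (f c' - f c) ≤ lam / 2 * (L * (c' - c)) := by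
      apply mul_le_mul_of_nonneg_left _ (by linarith)
      calc f c' - f c ≤ |f c' - f c| := le_abs_self _
        _ ≤ L * (c' - c) := h1
    have h3 : lam / 2 * (L * (c' - c)) ≤ 1 / 6 * (c' - c) := by
      nlinarith [sub_nonneg.mpr hcc]
    simp only [H]
    nlinarith
  have hmona : ∀ a ∈ Set.Icc m M, ∀ a' ∈ Set.Icc m M, ∀ b, ∀ c,
      a ≤ a' → H a b c ≤ H a' b c := by
    intro a ha a' ha' b c haa
    have h1 := lip a ha a' ha' haa
    have h2 : -(lam / 2 * (f a' - f a)) ≤ lam / 2 * (L * (a' - a)) := by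
      rw [neg_le]
      rw [neg_mul_eq_mul_neg]
      apply mul_le_mul_of_nonneg_left _ (by linarith : (0:ℝ) ≤ lam / 2)
      calc -(L * (a' - a)) ≤ -(|f a' - f a|) := by linarith
        _ ≤ f a' - f a := neg_abs_le _
    have h3 : lam / 2 * (L * (a' - a)) ≤ 1 / 6 * (a' - a) := by
      nlinarith [sub_nonneg.mpr haa]
    simp only [H]
    nlinarith
  refine ⟨fun a ha a' ha' b _ c _ h => hmona a ha a' ha' b c h,
    fun a _ b _ b' _ c _ h => ?_,
    fun a _ b _ c hc c' hc' h => hmonc a b c hc c' hc' h,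
    fun a ha b hb c hc => ?_⟩
  · simp only [H]
    nlinarith
  · constructor
    · have h1 : H m m m ≤ H a m m := hmona m ⟨le_refl m, hmM⟩ a ha m m ha.1
      have h2 : H a m m ≤ H a b m := by simp only [H]; nlinarith [hb.1]
      have h3 : H a b m ≤ H a b c := hmonc a b m ⟨le_refl m, hmM⟩ c hc hc.1
      have h0 : H m m m = m := by simp only [H]; ring
      linarith
    · have h1 : H a b c ≤ H M b c := hmona a ha M ⟨hmM, le_refl M⟩ b c ha.2
      have h2 : H M b c ≤ H M M c := by simp only [H]; nlinarith [hb.2]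
      have h3 : H M M c ≤ H M M M := hmonc M M c hc M ⟨hmM, le_refl M⟩ hc.2
      have h0 : H M M M = M := by simp only [H]; ring
      linarith
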